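/- Let T be a rooted tree, M ⊆ T the set of shallowest marked vertices, η > 0 a parameter, and for each marked m ∈ M define |φ_m⟩ = √η |r⟩ + ∑_{v ∈ P(r,m), v≠r} (−1)^{ℓ_v} |v⟩, where ℓ_v is the depth of v. Then |φ_m⟩ is orthogonal to |ψ_v(η)⟩ for every unmarked vertex v, where |ψ_r(η)⟩ ∝ |r⟩ + √η ∑_{c←r} |c⟩ and |ψ_v(η)⟩ ∝ |v⟩ + ∑_{c←v} |c⟩ for v ≠ r; consequently |φ_m⟩ is a fixed point (eigenvalue-1 eigenvector) of the walk operator R_B R_A(η). -/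

import Mathlib

open Finset

/-- The path state `|φ_m⟩ = √η |r⟩ + ∑_{v ∈ P(r,m), v ≠ r} (-1)^{ℓ_v} |v⟩` associated to a
shallowest marked vertex `m` is orthogonal to every diffusion state `|ψ_v(η)⟩` of an
unmarked vertex `v`, and is consequently a fixed point of the walk operator `R_B R_A(η)`. -/
theorem path_state_fixed_point {V : Type*} [Fintype V] [DecidableEq V]
    (r : V) (children : V → Finset V) (depth : V → ℕ) (marked : V → Prop)
    [DecidablePred marked]
    -- tree structure hypotheses
    (hpar : ∀ v₁ v₂ c, c ∈ children v₁ → c ∈ children v₂ → v₁ = v₂)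
    (hroot : ∀ v, r ∉ children v)
    (hdepth : ∀ v c, c ∈ children v → depth c = depth v + 1)
    (hdepthr : depth r = 0)
    (η : ℝ) (hη : 0 < η)
    -- the path from the root to the marked vertex m
    (L : ℕ) (hL : 0 < L) (anc : ℕ → V) (m : V)
    (hanc0 : anc 0 = r) (hancL : anc L = m)
    (hchain : ∀ i < L, anc (i + 1) ∈ children (anc i))
    (hinj : ∀ i ≤ L, ∀ j ≤ L, anc i = anc j → i = j)
    (hm : marked m)
    (hshallow : ∀ i < L, ¬ marked (anc i))
    -- the diffusion states
    (ψ : V → EuclideanSpace ℝ V)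
    (hψr : ψ r = (Real.sqrt (1 + ((children r).card : ℝ) * η))⁻¹ •
      (EuclideanSpace.single r (1 : ℝ) +
        Real.sqrt η • ∑ c ∈ children r, EuclideanSpace.single c (1 : ℝ)))
    (hψ : ∀ v, v ≠ r → ψ v = (Real.sqrt ((children v).card : ℝ))⁻¹ •
      (EuclideanSpace.single v (1 : ℝ) +
        ∑ c ∈ children v, EuclideanSpace.single c (1 : ℝ)))
    -- the path state
    (φ : EuclideanSpace ℝ V)
    (hφ : φ = Real.sqrt η • EuclideanSpace.single r (1 : ℝ) +
      ∑ i ∈ Finset.Icc 1 L,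
        ((-1 : ℝ)) ^ depth (anc i) • EuclideanSpace.single (anc i) (1 : ℝ))
    -- the walk operators: direct sums of the diffusion operators D_v over even (A)
    -- and odd (B) depth vertices, with D_v = I for marked v
    (RA RB : EuclideanSpace ℝ V →ₗ[ℝ] EuclideanSpace ℝ V)
    (hRA : ∀ x, RA x = x - (2 : ℝ) •
      ∑ v ∈ Finset.univ.filter (fun v => Even (depth v) ∧ ¬ marked v),
        (inner ℝ (ψ v) x : ℝ) • ψ v)
    (hRB : ∀ x, RB x = x - (2 : ℝ) •
      ∑ v ∈ Finset.univ.filter (fun v => ¬ Even (depth v) ∧ ¬ marked v),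
        (inner ℝ (ψ v) x : ℝ) • ψ v) :
    (∀ v, ¬ marked v → (inner ℝ (ψ v) φ : ℝ) = 0) ∧ RB (RA φ) = φ := by
  classical
  have hrm : ¬ marked r := by
    have := hshallow 0 hL; rwa [hanc0] at this
  -- pointwise values of φ
  have hsumapp : ∀ (s : Finset ℕ) (f : ℕ → EuclideanSpace ℝ V) (w : V),
      (∑ i ∈ s, f i) w = ∑ i ∈ s, f i w := by
    intro s f w
    induction s using Finset.cons_induction with
    | empty => rfl
    | cons a s ha ih => rw [Finset.sum_cons, Finset.sum_cons, PiLp.add_apply, ih]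
  have hφval : ∀ w, φ w = (if w = r then Real.sqrt η else 0) +
      ∑ i ∈ Finset.Icc 1 L, (if w = anc i then ((-1:ℝ))^(depth (anc i)) else 0) := by
    intro w
    rw [hφ]
    simp only [PiLp.add_apply, PiLp.smul_apply, hsumapp,
      EuclideanSpace.single_apply, smul_eq_mul, mul_ite, mul_one, mul_zero]
  -- sum of φ over children of any vertex
  have hchsum : ∀ v, ∑ c ∈ children v, φ c =
      ∑ i ∈ Finset.Icc 1 L, (if anc i ∈ children v then ((-1:ℝ))^(depth (anc i)) else 0) := by
    intro v
    simp only [hφval]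
    rw [Finset.sum_add_distrib, Finset.sum_ite_eq' (children v) r, if_neg (hroot v),
      zero_add, Finset.sum_comm]
    refine Finset.sum_congr rfl fun i _ => ?_
    rw [Finset.sum_ite_eq' (children v) (anc i)]
  -- values on the path
  have hpathval : ∀ j, 1 ≤ j → j ≤ L → φ (anc j) = ((-1:ℝ))^(depth (anc j)) := by
    intro j hj1 hjL
    rw [hφval]
    rw [if_neg, Finset.sum_eq_single_of_mem j (Finset.mem_Icc.mpr ⟨hj1, hjL⟩), if_pos rfl,
      zero_add]
    · intro i hi hne
      rw [if_neg]
      intro h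
      exact hne (hinj j hjL i (Finset.mem_Icc.mp hi).2 h).symm
    · intro h
      rw [← hanc0] at h
      exact hj1.not_gt (by simpa using hinj j hjL 0 (Nat.zero_le L) h)
  -- children sum for a path vertex
  have hchpath : ∀ j, j < L → ∑ c ∈ children (anc j), φ c =
      ((-1:ℝ))^(depth (anc (j + 1))) := by
    intro j hjL
    rw [hchsum]
    rw [Finset.sum_eq_single_of_mem (j + 1)
      (Finset.mem_Icc.mpr ⟨Nat.succ_le_succ (Nat.zero_le j), hjL⟩),
      if_pos (hchain j hjL)]
    intro i hi hne
    obtain ⟨hi1, hiL⟩ := Finset.mem_Icc.mp hi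
    rw [if_neg]
    intro h
    obtain ⟨k, rfl⟩ := Nat.exists_eq_add_of_le hi1
    have hk : k < L := by omega
    have := hpar (anc k) (anc j) (anc (k + 1)) (hchain k hk) (by rwa [Nat.add_comm] at h)
    have := hinj k (le_of_lt hk) j (le_of_lt hjL) this
    omega
  -- children sum for an off-path vertex
  have hchoff : ∀ v, (∀ j ≤ L, anc j ≠ v) → ∑ c ∈ children v, φ c = 0 := by
    intro v hv
    rw [hchsum]
    refine Finset.sum_eq_zero fun i hi => ?_
    obtain ⟨hi1, hiL⟩ := Finset.mem_Icc.mp hi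
    rw [if_neg]
    intro h
    obtain ⟨k, rfl⟩ := Nat.exists_eq_add_of_le hi1
    have hk : k < L := by omega
    exact hv k (le_of_lt hk)
      (hpar (anc k) v (anc (k + 1)) (hchain k hk) (by rwa [Nat.add_comm] at h))
  -- value of φ off the path
  have hoffval : ∀ v, (∀ j ≤ L, anc j ≠ v) → φ v = 0 := by
    intro v hv
    rw [hφval, if_neg (fun h => hv 0 (Nat.zero_le L) (hanc0.trans h.symm)), zero_add]
    refine Finset.sum_eq_zero fun i hi => ?_
    obtain ⟨hi1, hiL⟩ := Finset.mem_Icc.mp hi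
    exact if_neg fun h => hv i hiL h.symm
  -- inner products expressed via φ values
  have hinner : ∀ v, ¬ marked v → (inner ℝ (ψ v) φ : ℝ) = 0 := by
    intro v hvm
    by_cases hvr : v = r
    · subst hvr
      rw [hψr, real_inner_smul_left, inner_add_left, real_inner_smul_left, sum_inner]
      simp only [EuclideanSpace.inner_single_left, map_one, one_mul]
      have h1 : φ v = Real.sqrt η := by
        rcases Nat.eq_or_lt_of_le hL with h | h
        · rw [hφval, if_pos rfl]
          rw [Finset.sum_eq_zero, add_zero]
          intro i hi
          obtain ⟨hi1, hiL⟩ := Finset.mem_Icc.mp hi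
          refine if_neg fun h => ?_
          rw [← hanc0] at h
          have := hinj 0 (Nat.zero_le L) i hiL h
          omega
        · rw [hφval, if_pos rfl]
          rw [Finset.sum_eq_zero, add_zero]
          intro i hi
          obtain ⟨hi1, hiL⟩ := Finset.mem_Icc.mp hi
          refine if_neg fun h => ?_
          rw [← hanc0] at h
          have := hinj 0 (Nat.zero_le L) i hiL h
          omega
      have h2 : ∑ c ∈ children v, φ c = -1 := by
        rw [← hanc0, hchpath 0 hL, hdepth (anc 0) (anc 1) (hchain 0 hL), hanc0, hdepthr]
        norm_num
      rw [h1, h2]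
      ring
    · by_cases hv : ∃ j, j ≤ L ∧ anc j = v
      · obtain ⟨j, hjL, rfl⟩ := hv
        have hjlt : j < L := by
          rcases Nat.eq_or_lt_of_le hjL with h | h
          · exact absurd (h ▸ hancL ▸ hm) hvm
          · exact h
        have hj1 : 1 ≤ j := by
          rcases Nat.eq_zero_or_pos j with h | h
          · exact absurd (h ▸ hanc0) hvr
          · exact h
        rw [hψ _ hvr, real_inner_smul_left, inner_add_left, sum_inner]
        simp only [EuclideanSpace.inner_single_left, map_one, one_mul]
        rw [hpathval j hj1 hjL, hchpath j hjlt,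
          hdepth (anc j) (anc (j + 1)) (hchain j hjlt), pow_succ]
        ring
      · push_neg at hv
        rw [hψ _ hvr, real_inner_smul_left, inner_add_left, sum_inner]
        simp only [EuclideanSpace.inner_single_left, map_one, one_mul]
        rw [hoffval v hv, hchoff v hv]
        ring
  refine ⟨hinner, ?_⟩
  have hRAφ : RA φ = φ := by
    rw [hRA, Finset.sum_eq_zero, smul_zero, sub_zero]
    intro v hv
    rw [hinner v (Finset.mem_filter.mp hv).2.2, zero_smul]
  rw [hRAφ, hRB, Finset.sum_eq_zero, smul_zero, sub_zero]
  intro v hv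
  rw [hinner v (Finset.mem_filter.mp hv).2.2, zero_smul]
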